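/- Let (X_j)_{j∈V}, V ⊆ ℤ^d finite, be a centered m-dependent random field with 0 < E X_j² < ∞ and satisfying the Bernstein condition |E X_j^p| ≤ (p!/2) H^{p−2} E X_j² for all p ≥ 3, j ∈ V, for some H > 0. Suppose moreover |X_j| ≤ 2 almost surely (so the condition holds with H = 2). Then for S_V = Σ_{j∈V} X_j and any x ≥ 0, P(|S_V| ≥ x) ≤ 2 exp( − x² / (8 (m+1)^d (x + 2|V|)) ). -/

import Mathlib

open MeasureTheory ProbabilityTheory Real

-- pointwise Hoeffding chord bound
lemma exp_chord {s y : ℝ} (hy : |y| ≤ 2) :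
    Real.exp (s * y) ≤ (Real.exp (-(2*s)) + Real.exp (2*s)) / 2
      + (Real.exp (2*s) - Real.exp (-(2*s))) / 4 * y := by
  rw [abs_le] at hy
  have ha : (0:ℝ) ≤ (2 - y)/4 := by linarith
  have hb : (0:ℝ) ≤ (2 + y)/4 := by linarith
  have hab : (2 - y)/4 + (2 + y)/4 = 1 := by ring
  have h := convexOn_exp.2 (Set.mem_univ (-(2*s))) (Set.mem_univ (2*s)) ha hb hab
  simp only [smul_eq_mul] at h
  have he : (2 - y)/4 * (-(2*s)) + (2 + y)/4 * (2*s) = s * y := by ring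
  rw [he] at h
  calc Real.exp (s * y) ≤ (2 - y)/4 * Real.exp (-(2*s)) + (2 + y)/4 * Real.exp (2*s) := h
    _ = (Real.exp (-(2*s)) + Real.exp (2*s)) / 2
        + (Real.exp (2*s) - Real.exp (-(2*s))) / 4 * y := by ring

section aux
variable {Ω : Type*} [MeasurableSpace Ω] {P : Measure Ω} [IsProbabilityMeasure P]

lemma integrable_of_ae_bdd {f : Ω → ℝ} (hm : Measurable f) {C : ℝ}
    (hb : ∀ᵐ ω ∂P, |f ω| ≤ C) : Integrable f P :=
  (integrable_const C).mono' hm.aestronglyMeasurable hb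

lemma integrable_exp_of_ae_bdd {f : Ω → ℝ} (hm : Measurable f)
    (hb : ∀ᵐ ω ∂P, |f ω| ≤ 2) (s : ℝ) :
    Integrable (fun ω => Real.exp (s * f ω)) P := by
  refine integrable_of_ae_bdd (Real.measurable_exp.comp (hm.const_mul s)) (C := Real.exp (|s| * 2)) ?_
  filter_upwards [hb] with ω hω
  rw [abs_of_pos (Real.exp_pos _)]
  apply Real.exp_le_exp.2
  calc s * f ω ≤ |s * f ω| := le_abs_self _
    _ = |s| * |f ω| := abs_mul _ _
    _ ≤ |s| * 2 := by gcongr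

/-- single-variable Hoeffding mgf bound -/
lemma mgf_single {f : Ω → ℝ} (hm : Measurable f) (hc : ∫ ω, f ω ∂P = 0)
    (hb : ∀ᵐ ω ∂P, |f ω| ≤ 2) (s : ℝ) :
    ∫ ω, Real.exp (s * f ω) ∂P ≤ Real.exp (2 * s^2) := by
  have hif : Integrable f P := integrable_of_ae_bdd hm hb
  set c1 : ℝ := (Real.exp (-(2*s)) + Real.exp (2*s)) / 2
  set c2 : ℝ := (Real.exp (2*s) - Real.exp (-(2*s))) / 4
  have h1 : ∫ ω, Real.exp (s * f ω) ∂P ≤ ∫ ω, (c1 + c2 * f ω) ∂P := by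
    refine integral_mono_ae (integrable_exp_of_ae_bdd hm hb s)
      ((integrable_const c1).add (hif.const_mul c2)) ?_
    filter_upwards [hb] with ω hω
    exact exp_chord hω
  have h2 : ∫ ω, (c1 + c2 * f ω) ∂P = c1 := by
    rw [integral_add (integrable_const c1) (hif.const_mul c2), integral_const,
      integral_const_mul, hc]
    simp
  have h3 : c1 = Real.cosh (2*s) := by rw [Real.cosh_eq]; ring
  calc ∫ ω, Real.exp (s * f ω) ∂P ≤ c1 := h1.trans h2.le
    _ = Real.cosh (2*s) := h3
    _ ≤ Real.exp ((2*s)^2/2) := Real.cosh_le_exp_half_sq _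
    _ = Real.exp (2 * s^2) := by ring_nf


lemma integrable_prod_exp {d : ℕ} {X : (Fin d → ℤ) → Ω → ℝ}
    (hmeas : ∀ j, Measurable (X j)) (s0 : ℝ) (c : Finset (Fin d → ℤ))
    (hb : ∀ j ∈ c, ∀ᵐ ω ∂P, |X j ω| ≤ 2) :
    Integrable (fun ω => ∏ j ∈ c, Real.exp (s0 * X j ω)) P := by
  refine integrable_of_ae_bdd (Finset.measurable_prod _ fun j _ =>
    Real.measurable_exp.comp ((hmeas j).const_mul s0)) (C := Real.exp (|s0| * 2) ^ c.card) ?_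
  have hball : ∀ᵐ ω ∂P, ∀ j ∈ c, |X j ω| ≤ 2 := (ae_ball_iff c.countable_toSet).2 hb
  filter_upwards [hball] with ω hω
  rw [abs_of_nonneg (Finset.prod_nonneg fun j _ => (Real.exp_pos _).le), ← Finset.prod_const]
  refine Finset.prod_le_prod (fun j _ => (Real.exp_pos _).le) fun j hj => Real.exp_le_exp.2 ?_
  calc s0 * X j ω ≤ |s0 * X j ω| := le_abs_self _
    _ = |s0| * |X j ω| := abs_mul _ _
    _ ≤ |s0| * 2 := by gcongr; exact hω j hj

lemma integral_prod_exp {d : ℕ} {X : (Fin d → ℤ) → Ω → ℝ} {m : ℕ}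
    (hmeas : ∀ j, Measurable (X j))
    (hmdep : ∀ S T : Finset (Fin d → ℤ),
      (∀ s ∈ S, ∀ t ∈ T, (m : ℝ) < dist s t) →
      IndepFun (fun ω => fun s : S => X s ω) (fun ω => fun t : T => X t ω) P)
    (s0 : ℝ) (c : Finset (Fin d → ℤ))
    (hb : ∀ j ∈ c, ∀ᵐ ω ∂P, |X j ω| ≤ 2)
    (hfar : ∀ j ∈ c, ∀ j' ∈ c, j ≠ j' → (m : ℝ) < dist j j') :
    ∫ ω, ∏ j ∈ c, Real.exp (s0 * X j ω) ∂P
      = ∏ j ∈ c, ∫ ω, Real.exp (s0 * X j ω) ∂P := by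
  classical
  induction c using Finset.induction_on with
  | empty => simp
  | @insert a s ha ih =>
    have hmem : a ∈ insert a s := Finset.mem_insert_self a s
    have hbs : ∀ j ∈ s, ∀ᵐ ω ∂P, |X j ω| ≤ 2 := fun j hj => hb j (Finset.mem_insert_of_mem hj)
    have hindep0 := hmdep {a} s (by
      intro u hu t ht
      rw [Finset.mem_singleton] at hu
      subst hu
      exact hfar u hmem t (Finset.mem_insert_of_mem ht) (fun h => ha (h ▸ ht)))
    have mφ : Measurable (fun v : ({a} : Finset (Fin d → ℤ)) → ℝ =>
        Real.exp (s0 * v ⟨a, Finset.mem_singleton_self a⟩)) :=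
      by fun_prop
    have mψ : Measurable (fun v : {x // x ∈ s} → ℝ =>
        ∏ j ∈ s.attach, Real.exp (s0 * v j)) :=
      Finset.measurable_prod _ fun j _ =>
        by fun_prop
    have hIF : IndepFun (fun ω => Real.exp (s0 * X a ω))
        (fun ω => ∏ j ∈ s.attach, Real.exp (s0 * X j ω)) P := hindep0.comp mφ mψ
    have hattach : ∀ ω, (∏ j ∈ s.attach, Real.exp (s0 * X j ω))
        = ∏ j ∈ s, Real.exp (s0 * X j ω) := fun ω => Finset.prod_attach s (fun j => Real.exp (s0 * X j ω))
    have hIF2 : IndepFun (fun ω => Real.exp (s0 * X a ω))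
        (fun ω => ∏ j ∈ s, Real.exp (s0 * X j ω)) P := by
      have := hIF
      simp only [funext hattach] at this
      exact this
    have int1 : Integrable (fun ω => Real.exp (s0 * X a ω)) P := by
      have := integrable_prod_exp (P := P) hmeas s0 {a} (fun j hj => by
        rw [Finset.mem_singleton] at hj; exact hj ▸ hb a hmem)
      simpa using this
    have int2 : Integrable (fun ω => ∏ j ∈ s, Real.exp (s0 * X j ω)) P :=
      integrable_prod_exp hmeas s0 s hbs
    have hmul := IndepFun.integral_mul_eq_mul_integral hIF2 int1.aestronglyMeasurable int2.aestronglyMeasurable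
    have hfars : ∀ j ∈ s, ∀ j' ∈ s, j ≠ j' → (m : ℝ) < dist j j' :=
      fun j hj j' hj' hne => hfar j (Finset.mem_insert_of_mem hj) j'
        (Finset.mem_insert_of_mem hj') hne
    simp only [Finset.prod_insert ha]
    rw [← ih hbs hfars, ← hmul]
    rfl

/-- residue class map mod (m+1) -/
def bernsteinRes (m d : ℕ) (j : Fin d → ℤ) : Fin d → Fin (m + 1) := fun i =>
  ⟨(j i % ((m : ℤ) + 1)).toNat, by
    have h0 : ((m : ℤ) + 1) ≠ 0 := by positivity
    have h1 : 0 ≤ j i % ((m : ℤ) + 1) := Int.emod_nonneg _ h0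
    have h2 : j i % ((m : ℤ) + 1) < (m : ℤ) + 1 := Int.emod_lt_of_pos _ (by positivity)
    omega⟩

lemma bernsteinRes_dist {m d : ℕ} {j j' : Fin d → ℤ}
    (hr : bernsteinRes m d j = bernsteinRes m d j') (hne : j ≠ j') :
    (m : ℝ) < dist j j' := by
  obtain ⟨i, hi⟩ : ∃ i, j i ≠ j' i := by
    by_contra h
    push_neg at h
    exact hne (funext h)
  have hmod : j i % ((m : ℤ) + 1) = j' i % ((m : ℤ) + 1) := by
    have := congrFun hr i
    simp only [bernsteinRes, Fin.mk.injEq] at this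
    have h0 : ((m : ℤ) + 1) ≠ 0 := by positivity
    have h1 : 0 ≤ j i % ((m : ℤ) + 1) := Int.emod_nonneg _ h0
    have h1' : 0 ≤ j' i % ((m : ℤ) + 1) := Int.emod_nonneg _ h0
    omega
  have hdvd : ((m : ℤ) + 1) ∣ (j i - j' i) := Int.ModEq.dvd hmod.symm
  have habs : ((m : ℤ) + 1) ≤ |j i - j' i| :=
    Int.le_of_dvd (abs_pos.2 (sub_ne_zero.2 hi)) ((dvd_abs _ _).2 hdvd)
  have hdi : dist (j i) (j' i) ≤ dist j j' := dist_le_pi_dist j j' i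
  have hval : ((m : ℝ) + 1) ≤ dist (j i) (j' i) := by
    rw [Int.dist_eq]
    have : ((|j i - j' i| : ℤ) : ℝ) = |((j i : ℝ)) - ((j' i : ℝ))| := by
      push_cast [Int.cast_abs]
      ring_nf
    rw [← this]
    exact_mod_cast habs
  linarith

lemma bernstein_one_side {d : ℕ}
    (V : Finset (Fin d → ℤ)) (X : (Fin d → ℤ) → Ω → ℝ) (m : ℕ)
    (hmeas : ∀ j, Measurable (X j))
    (hmdep : ∀ S T : Finset (Fin d → ℤ),
      (∀ s ∈ S, ∀ t ∈ T, (m : ℝ) < dist s t) →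
      IndepFun (fun ω => fun s : S => X s ω) (fun ω => fun t : T => X t ω) P)
    (hcent : ∀ j ∈ V, (∫ ω, X j ω ∂P) = 0)
    (hbdd : ∀ j ∈ V, ∀ᵐ ω ∂P, |X j ω| ≤ 2)
    (x : ℝ) (hx : 0 ≤ x) (hV : 0 < V.card) :
    P {ω | x ≤ ∑ j ∈ V, X j ω} ≤
      ENNReal.ofReal (Real.exp (-(x^2) / (8 * ((m:ℝ)+1)^d * V.card))) := by
  classical
  set k : ℝ := ((m:ℝ)+1)^d with hkdef
  have hkpos : 0 < k := by positivity
  set n : ℝ := (V.card : ℝ) with hndef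
  have hnpos : 0 < n := by rw [hndef]; exact_mod_cast hV
  set t : ℝ := x / (4*k*n) with htdef
  have ht : 0 ≤ t := by positivity
  -- residue classes
  set ι := (Fin d → Fin (m+1))
  set Vc : ι → Finset (Fin d → ℤ) := fun c => V.filter (fun j => bernsteinRes m d j = c)
    with hVcdef
  have hVcsub : ∀ c, Vc c ⊆ V := fun c => Finset.filter_subset _ _
  have hbddc : ∀ c, ∀ j ∈ Vc c, ∀ᵐ ω ∂P, |X j ω| ≤ 2 := fun c j hj => hbdd j (hVcsub c hj)
  have hfar : ∀ c, ∀ j ∈ Vc c, ∀ j' ∈ Vc c, j ≠ j' → (m : ℝ) < dist j j' := by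
    intro c j hj j' hj' hne
    rw [hVcdef, Finset.mem_filter] at hj hj'
    exact bernsteinRes_dist (hj.2.trans hj'.2.symm) hne
  have hcardk : (Fintype.card ι : ℝ) = k := by simp [ι, Fintype.card_fun, hkdef]
  have hsplit : ∀ ω, ∑ c : ι, ∑ j ∈ Vc c, X j ω = ∑ j ∈ V, X j ω := fun ω =>
    Finset.sum_fiberwise_of_maps_to (fun j _ => Finset.mem_univ _) _
  have hcards : ∑ c : ι, (Vc c).card = V.card :=
    (Finset.card_eq_sum_card_fiberwise (fun j _ => Finset.mem_univ _)).symm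
  have hexp_sum : ∀ (s0 : ℝ) (c : Finset (Fin d → ℤ)) (ω : Ω),
      Real.exp (s0 * ∑ j ∈ c, X j ω) = ∏ j ∈ c, Real.exp (s0 * X j ω) := by
    intro s0 c ω
    rw [Finset.mul_sum, Real.exp_sum]
  -- per-class mgf bound
  have hclass : ∀ c : ι, ∫ ω, Real.exp (t*k * ∑ j ∈ Vc c, X j ω) ∂P
      ≤ Real.exp (2*(t*k)^2 * (Vc c).card) := by
    intro c
    have h1 : ∫ ω, Real.exp (t*k * ∑ j ∈ Vc c, X j ω) ∂P
        = ∏ j ∈ Vc c, ∫ ω, Real.exp (t*k * X j ω) ∂P := by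
      simp_rw [hexp_sum (t*k) (Vc c)]
      exact integral_prod_exp hmeas hmdep (t*k) (Vc c) (hbddc c) (hfar c)
    rw [h1]
    calc ∏ j ∈ Vc c, ∫ ω, Real.exp (t*k * X j ω) ∂P
        ≤ ∏ j ∈ Vc c, Real.exp (2*(t*k)^2) := by
          refine Finset.prod_le_prod (fun j _ => integral_nonneg fun ω => (Real.exp_pos _).le)
            fun j hj => mgf_single (hmeas j) (hcent j (hVcsub c hj)) (hbdd j (hVcsub c hj)) _
      _ = Real.exp (2*(t*k)^2 * (Vc c).card) := by
          rw [Finset.prod_const, ← Real.exp_nat_mul]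
          ring_nf
  -- integrability
  have hintc : ∀ (s0 : ℝ) (c : Finset (Fin d → ℤ)) (_ : c ⊆ V),
      Integrable (fun ω => Real.exp (s0 * ∑ j ∈ c, X j ω)) P := by
    intro s0 c hc
    simp_rw [hexp_sum s0 c]
    exact integrable_prod_exp hmeas s0 c (fun j hj => hbdd j (hc hj))
  -- Hoelder
  have hpt : ∀ ω, ENNReal.ofReal (Real.exp (t * ∑ j ∈ V, X j ω))
      = ∏ c : ι, (ENNReal.ofReal (Real.exp (t*k * ∑ j ∈ Vc c, X j ω))) ^ (1/k : ℝ) := by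
    intro ω
    have : ∀ c : ι, (ENNReal.ofReal (Real.exp (t*k * ∑ j ∈ Vc c, X j ω))) ^ (1/k : ℝ)
        = ENNReal.ofReal (Real.exp (t * ∑ j ∈ Vc c, X j ω)) := by
      intro c
      rw [ENNReal.ofReal_rpow_of_pos (Real.exp_pos _), ← Real.exp_mul]
      congr 2
      field_simp
    simp_rw [this]
    rw [← ENNReal.ofReal_prod_of_nonneg (fun c _ => (Real.exp_pos _).le), ← Real.exp_sum]
    congr 2
    rw [← Finset.mul_sum]
    congr 1
    exact (hsplit ω).symm
  have hmeasS : ∀ c : ι, Measurable (fun ω => ∑ j ∈ Vc c, X j ω) :=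
    fun c => Finset.measurable_sum _ fun j _ => hmeas j
  have hhold : ∫⁻ ω, ENNReal.ofReal (Real.exp (t * ∑ j ∈ V, X j ω)) ∂P
      ≤ ∏ c : ι, (∫⁻ ω, ENNReal.ofReal (Real.exp (t*k * ∑ j ∈ Vc c, X j ω)) ∂P) ^ (1/k : ℝ) := by
    simp_rw [hpt]
    refine ENNReal.lintegral_prod_norm_pow_le _ (fun c _ =>
      (ENNReal.measurable_ofReal.comp (Real.measurable_exp.comp
        ((hmeasS c).const_mul _))).aemeasurable) ?_ (fun c _ => by positivity)
    rw [Finset.sum_const, Finset.card_univ, nsmul_eq_mul, hcardk]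
    field_simp
  -- bound RHS of Hoelder
  have hclass' : ∀ c : ι, (∫⁻ ω, ENNReal.ofReal (Real.exp (t*k * ∑ j ∈ Vc c, X j ω)) ∂P)
      ≤ ENNReal.ofReal (Real.exp (2*(t*k)^2 * (Vc c).card)) := by
    intro c
    rw [← ofReal_integral_eq_lintegral_ofReal (hintc (t*k) (Vc c) (hVcsub c))
      (Filter.Eventually.of_forall fun ω => (Real.exp_pos _).le)]
    exact ENNReal.ofReal_le_ofReal (hclass c)
  have hfinal : ∫⁻ ω, ENNReal.ofReal (Real.exp (t * ∑ j ∈ V, X j ω)) ∂P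
      ≤ ENNReal.ofReal (Real.exp (2 * t^2 * k * n)) := by
    refine hhold.trans ?_
    calc ∏ c : ι, (∫⁻ ω, ENNReal.ofReal (Real.exp (t*k * ∑ j ∈ Vc c, X j ω)) ∂P) ^ (1/k : ℝ)
        ≤ ∏ c : ι, (ENNReal.ofReal (Real.exp (2*(t*k)^2 * (Vc c).card))) ^ (1/k : ℝ) :=
          Finset.prod_le_prod' fun c _ => ENNReal.rpow_le_rpow (hclass' c) (by positivity)
      _ = ∏ c : ι, ENNReal.ofReal (Real.exp (2*(t*k)^2 * (Vc c).card * (1/k))) := by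
          refine Finset.prod_congr rfl fun c _ => ?_
          rw [ENNReal.ofReal_rpow_of_pos (Real.exp_pos _), ← Real.exp_mul]
      _ = ENNReal.ofReal (Real.exp (∑ c : ι, 2*(t*k)^2 * (Vc c).card * (1/k))) := by
          rw [← ENNReal.ofReal_prod_of_nonneg (fun c _ => (Real.exp_pos _).le), ← Real.exp_sum]
      _ = ENNReal.ofReal (Real.exp (2 * t^2 * k * n)) := by
          congr 2
          have : ∑ c : ι, 2*(t*k)^2 * ((Vc c).card : ℝ) * (1/k)
              = 2*(t*k)^2 * (1/k) * ∑ c : ι, ((Vc c).card : ℝ) := by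
            rw [Finset.mul_sum]
            exact Finset.sum_congr rfl fun c _ => by ring
          rw [this]
          have hsum : ∑ c : ι, ((Vc c).card : ℝ) = n := by
            rw [hndef, ← hcards]
            push_cast
            rfl
          rw [hsum]
          field_simp
  -- from lintegral to integral
  have hintS : Integrable (fun ω => Real.exp (t * ∑ j ∈ V, X j ω)) P :=
    hintc t V (subset_refl V)
  have hmgf : ∫ ω, Real.exp (t * ∑ j ∈ V, X j ω) ∂P ≤ Real.exp (2 * t^2 * k * n) := by
    have h0 := ofReal_integral_eq_lintegral_ofReal hintS
      (Filter.Eventually.of_forall fun ω => (Real.exp_pos _).le)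
    rw [← ENNReal.ofReal_le_ofReal_iff (Real.exp_pos _).le, h0]
    exact hfinal
  -- Chernoff
  have hcher := measure_ge_le_exp_mul_mgf (X := fun ω => ∑ j ∈ V, X j ω) (μ := P) (t := t)
    x ht hintS
  have hmgf' : mgf (fun ω => ∑ j ∈ V, X j ω) P t = ∫ ω, Real.exp (t * ∑ j ∈ V, X j ω) ∂P := rfl
  rw [ENNReal.le_ofReal_iff_toReal_le (measure_ne_top P _) (Real.exp_pos _).le]
  refine hcher.trans ?_
  rw [hmgf']
  calc Real.exp (-t * x) * ∫ ω, Real.exp (t * ∑ j ∈ V, X j ω) ∂P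
      ≤ Real.exp (-t * x) * Real.exp (2 * t^2 * k * n) := by
        gcongr
      _ = Real.exp (-t * x + 2 * t^2 * k * n) := (Real.exp_add _ _).symm
      _ = Real.exp (-(x^2) / (8 * k * n)) := by
        congr 1
        rw [htdef]
        field_simp
        ring

end aux

/-- Bernstein-type exponential inequality for a centered `m`-dependent random field
`(X_j)_{j ∈ V}`, `V ⊆ ℤ^d` finite, with `|X_j| ≤ 2` a.s. and positive variances:
`P(|S_V| ≥ x) ≤ 2 exp(−x²/(8(m+1)^d (x + 2|V|)))` for all `x ≥ 0`. -/
theorem bernstein_m_dependent {d : ℕ} {Ω : Type*} [MeasurableSpace Ω]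
    (P : Measure Ω) [IsProbabilityMeasure P]
    (V : Finset (Fin d → ℤ)) (X : (Fin d → ℤ) → Ω → ℝ) (m : ℕ)
    (hmeas : ∀ j, Measurable (X j))
    (hmdep : ∀ S T : Finset (Fin d → ℤ),
      (∀ s ∈ S, ∀ t ∈ T, (m : ℝ) < dist s t) →
      IndepFun (fun ω => fun s : S => X s ω) (fun ω => fun t : T => X t ω) P)
    (hcent : ∀ j ∈ V, (∫ ω, X j ω ∂P) = 0)
    (hvarpos : ∀ j ∈ V, 0 < ∫ ω, (X j ω) ^ 2 ∂P)
    (hbdd : ∀ j ∈ V, ∀ᵐ ω ∂P, |X j ω| ≤ 2) :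
    ∀ x : ℝ, 0 ≤ x →
      P {ω | x ≤ |∑ j ∈ V, X j ω|} ≤
        ENNReal.ofReal
          (2 * Real.exp (-(x ^ 2) / (8 * (m + 1 : ℝ) ^ d * (x + 2 * V.card)))) := by
  intro x hx
  by_cases hV : V.card = 0
  · have hVe : V = ∅ := Finset.card_eq_zero.1 hV
    subst hVe
    simp only [Finset.sum_empty, abs_zero]
    rcases eq_or_lt_of_le hx with h0 | h0
    · have hset : {ω : Ω | x ≤ (0:ℝ)} = Set.univ := by
        ext ω; simp [← h0]
      rw [hset, measure_univ, ← h0]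
      simp only [Finset.card_empty, Nat.cast_zero]
      norm_num
    · have hset : {ω : Ω | x ≤ (0:ℝ)} = ∅ := by
        ext ω; simp [not_le.2 h0]
      rw [hset]
      simp
  · have hVpos : 0 < V.card := Nat.pos_of_ne_zero hV
    have hnpos : (0:ℝ) < V.card := by exact_mod_cast hVpos
    have hkpos : (0:ℝ) < ((m:ℝ)+1)^d := by positivity
    have h1 := bernstein_one_side (P := P) V X m hmeas hmdep hcent hbdd x hx hVpos
    -- negated field
    have hmeasn : ∀ j, Measurable (fun ω => -(X j ω)) := fun j => (hmeas j).neg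
    have hmdepn : ∀ S T : Finset (Fin d → ℤ),
        (∀ s ∈ S, ∀ t ∈ T, (m : ℝ) < dist s t) →
        IndepFun (fun ω => fun s : S => -(X s ω)) (fun ω => fun t : T => -(X t ω)) P := by
      intro S T h
      have mφ : Measurable (fun v : S → ℝ => fun s : S => -(v s)) :=
        measurable_pi_lambda _ fun s => (measurable_pi_apply s).neg
      have mψ : Measurable (fun v : T → ℝ => fun t : T => -(v t)) :=
        measurable_pi_lambda _ fun t => (measurable_pi_apply t).neg
      exact (hmdep S T h).comp mφ mψ
    have hcentn : ∀ j ∈ V, (∫ ω, -(X j ω) ∂P) = 0 := by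
      intro j hj
      rw [integral_neg, hcent j hj, neg_zero]
    have hbddn : ∀ j ∈ V, ∀ᵐ ω ∂P, |(-(X j ω))| ≤ 2 := by
      intro j hj
      filter_upwards [hbdd j hj] with ω hω
      rwa [abs_neg]
    have h2 := bernstein_one_side (P := P) V (fun j ω => -(X j ω)) m hmeasn hmdepn hcentn
      hbddn x hx hVpos
    have hsub : {ω | x ≤ |∑ j ∈ V, X j ω|} ⊆
        {ω | x ≤ ∑ j ∈ V, X j ω} ∪ {ω | x ≤ ∑ j ∈ V, -(X j ω)} := by
      intro ω hω
      simp only [Set.mem_setOf_eq] at hω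
      rcases le_abs.1 hω with h | h
      · exact Or.inl h
      · refine Or.inr ?_
        simp only [Set.mem_setOf_eq, Finset.sum_neg_distrib]
        exact h
    set e1 : ℝ := Real.exp (-(x^2) / (8 * ((m:ℝ)+1)^d * V.card)) with he1
    calc P {ω | x ≤ |∑ j ∈ V, X j ω|}
        ≤ P ({ω | x ≤ ∑ j ∈ V, X j ω} ∪ {ω | x ≤ ∑ j ∈ V, -(X j ω)}) := measure_mono hsub
      _ ≤ P {ω | x ≤ ∑ j ∈ V, X j ω} + P {ω | x ≤ ∑ j ∈ V, -(X j ω)} := measure_union_le _ _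
      _ ≤ ENNReal.ofReal e1 + ENNReal.ofReal e1 := add_le_add h1 h2
      _ = ENNReal.ofReal (e1 + e1) := (ENNReal.ofReal_add (Real.exp_pos _).le
          (Real.exp_pos _).le).symm
      _ ≤ ENNReal.ofReal
          (2 * Real.exp (-(x ^ 2) / (8 * (m + 1 : ℝ) ^ d * (x + 2 * V.card)))) := by
        refine ENNReal.ofReal_le_ofReal ?_
        have he : e1 + e1 = 2 * e1 := by ring
        rw [he]
        have hmono : e1 ≤ Real.exp (-(x ^ 2) / (8 * (m + 1 : ℝ) ^ d * (x + 2 * V.card))) := by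
          rw [he1]
          apply Real.exp_le_exp.2
          rw [neg_div, neg_div, neg_le_neg_iff]
          have hb : (0:ℝ) < 8 * ((m:ℝ)+1)^d * V.card := mul_pos (by positivity) hnpos
          exact div_le_div_of_nonneg_left (by positivity) hb
            (by rw [mul_le_mul_iff_of_pos_left (by positivity : (0:ℝ) < 8 * ((m:ℝ)+1)^d)]; linarith)
        linarith
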